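/- Suppose the irreducibility conditions hold: α < 1, β > 0, β+γ < 1, δ > 0, δ+φ < 1, κ < 1. Then A has at most two negative eigenvalues: the number of roots of the characteristic polynomial of A, counted with multiplicity, that lie in (−∞, 0) is at most 2. -/

import Mathlib

open Polynomial

/-- The 4×4 tridiagonal row-stochastic matrix with parameters α,β,γ,δ,φ,κ. -/
noncomputable def Amat (α β γ δ φ κ : ℝ) : Matrix (Fin 4) (Fin 4) ℝ :=
  !![α, 1-α, 0, 0;
     β, γ, 1-β-γ, 0;
     0, δ, φ, 1-δ-φ;
     0, 0, 1-κ, κ]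

section Aux

set_option maxHeartbeats 2000000 in
/-- Explicit characteristic polynomial of `Amat`. -/
lemma Amat_charpoly (α β γ δ φ κ : ℝ) :
    (Amat α β γ δ φ κ).charpoly =
      X^4 + C (-(α + γ + φ + κ)) * X^3
        + C (-1 + κ + φ - δ*κ + γ*κ + γ*φ + γ*δ - β + β*δ + α*κ + α*φ + α*γ + α*β) * X^2
        + C (δ*κ + γ - γ*κ - γ*φ - γ*δ + β*κ + β*φ - β*δ*κ + α - α*κ - α*φ + α*δ*κ
              - α*γ*κ - α*γ*φ - α*γ*δ - α*β*κ - α*β*φ - α*β*δ) * X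
        + C (β - β*κ - β*φ - β*δ + β*δ*κ - α*δ*κ - α*γ + α*γ*κ + α*γ*φ + α*γ*δ
              - α*β + α*β*κ + α*β*φ + α*β*δ) := by
  rw [Matrix.charpoly]
  have h : (Amat α β γ δ φ κ).charmatrix =
      !![X - C α, - C (1-α), 0, 0;
         - C β, X - C γ, - C (1-β-γ), 0;
         0, - C δ, X - C φ, - C (1-δ-φ);
         0, 0, - C (1-κ), X - C κ] := by
    ext i j
    fin_cases i <;> fin_cases j <;>
      simp [Amat, Matrix.charmatrix_apply, Matrix.diagonal, Matrix.vecHead, Matrix.vecTail]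
  rw [h]
  rw [Matrix.det_succ_row_zero]
  simp only [Fin.sum_univ_succ, Fin.sum_univ_zero, Matrix.submatrix_apply,
    Matrix.cons_val', Matrix.cons_val_zero, Matrix.cons_val_one, Matrix.head_cons,
    Matrix.head_fin_const, Matrix.cons_val_fin_one, Matrix.empty_val',
    Fin.succ_zero_eq_one, Matrix.det_fin_three, Fin.isValue]
  norm_num [Fin.succAbove, Fin.lt_def, Matrix.vecHead, Matrix.vecTail, Matrix.cons_val, Matrix.cons_val_two, Matrix.cons_val_three, Matrix.cons_val_succ']
  ring

/-- Expansion of the product of four linear factors. -/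
lemma prod_four_linear (r1 r2 r3 : ℝ) :
    (X - C r1) * ((X - C r2) * ((X - C r3) * (X - C (1:ℝ)))) =
      X^4 + C (-(r1 + r2 + r3 + 1)) * X^3
        + C (r1*r2 + r1*r3 + r2*r3 + r1 + r2 + r3) * X^2
        + C (-(r1*r2*r3 + r1*r2 + r1*r3 + r2*r3)) * X
        + C (r1*r2*r3) := by
  simp only [map_neg, map_add, map_mul, map_one]
  ring

/-- Extract the two coefficients we need from an equality of explicit quartics. -/
lemma coeff_extract (a3 a2 a1 a0 b3 b2 b1 b0 : ℝ)
    (h : X^4 + C a3 * X^3 + C a2 * X^2 + C a1 * X + C a0 =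
         X^4 + C b3 * X^3 + C b2 * X^2 + C b1 * X + C b0) :
    a3 = b3 ∧ a2 = b2 := by
  constructor
  · have h3 := congrArg (fun q => Polynomial.coeff q 3) h
    simpa [coeff_add, coeff_C_mul, coeff_X_pow, coeff_C, coeff_X] using h3
  · have h2 := congrArg (fun q => Polynomial.coeff q 2) h
    simpa [coeff_add, coeff_C_mul, coeff_X_pow, coeff_C, coeff_X] using h2

/-- The key inequality: under the stochasticity constraints and trace at most 1,
the relevant coefficient combination is nonpositive. -/
lemma core_ineq (α β γ δ φ κ : ℝ)
    (hα : 0 ≤ α) (hα1 : α ≤ 1) (hβ : 0 ≤ β) (hγ : 0 ≤ γ)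
    (hδ : 0 ≤ δ) (hφ : 0 ≤ φ) (hκ : 0 ≤ κ) (hκ1 : κ ≤ 1)
    (hβγ : β + γ ≤ 1) (hδφ : δ + φ ≤ 1)
    (htr : α + γ + φ + κ ≤ 1) :
    α*β + α*γ + α*κ + α*φ + β*δ + γ*δ + γ*φ + γ*κ ≤ α + β + γ + δ*κ := by
  rcases le_or_gt (α + δ) 1 with h1 | h1
  · rcases le_or_gt γ δ with h2 | h2
    · nlinarith [mul_nonneg hβ (by linarith : (0:ℝ) ≤ 1 - α - δ),
        mul_nonneg hγ (by linarith : (0:ℝ) ≤ 1 - δ - φ),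
        mul_nonneg hκ (by linarith : (0:ℝ) ≤ δ - γ),
        mul_nonneg hα (by linarith : (0:ℝ) ≤ 1 - γ - φ - κ)]
    · nlinarith [mul_nonneg hβ (by linarith : (0:ℝ) ≤ 1 - α - δ),
        mul_nonneg (by linarith : (0:ℝ) ≤ γ - δ) (by linarith : (0:ℝ) ≤ 1 - α - γ - φ - κ),
        sq_nonneg (γ - δ),
        mul_nonneg hδ (by linarith : (0:ℝ) ≤ 1 - δ - φ),
        mul_nonneg hα (by linarith : (0:ℝ) ≤ 1 - α - γ - φ - κ),
        mul_nonneg hα (by linarith : (0:ℝ) ≤ α + γ - δ)]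
  · nlinarith [mul_nonneg (by linarith : (0:ℝ) ≤ 1 - β - γ) (by linarith : (0:ℝ) ≤ α + δ - 1),
      mul_nonneg (by linarith : (0:ℝ) ≤ 1 - κ) (by linarith : (0:ℝ) ≤ 1 - δ - φ),
      mul_nonneg hφ (by linarith : (0:ℝ) ≤ 1 - α - γ - κ),
      mul_nonneg hκ (by linarith : (0:ℝ) ≤ 1 - α - γ)]

end Aux

theorem stmt_10 (α β γ δ φ κ : ℝ)
    (hα : 0 ≤ α) (hα1 : α ≤ 1) (hβ : 0 ≤ β) (hβ1 : β ≤ 1)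
    (hγ : 0 ≤ γ) (hγ1 : γ ≤ 1) (hδ : 0 ≤ δ) (hδ1 : δ ≤ 1)
    (hφ : 0 ≤ φ) (hφ1 : φ ≤ 1) (hκ : 0 ≤ κ) (hκ1 : κ ≤ 1)
    (hβγ : β + γ ≤ 1) (hδφ : δ + φ ≤ 1)
    (irr1 : α < 1) (irr2 : 0 < β) (irr3 : β + γ < 1)
    (irr4 : 0 < δ) (irr5 : δ + φ < 1) (irr6 : κ < 1) :
    ((Matrix.charpoly (Amat α β γ δ φ κ)).roots.filter (fun x : ℝ => x < 0)).card
      ≤ 2 := by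
  by_contra hcon
  push_neg at hcon
  have hcard3 : 3 ≤ ((Matrix.charpoly (Amat α β γ δ φ κ)).roots.filter
      (fun x : ℝ => x < 0)).card := hcon
  set p : Polynomial ℝ := Matrix.charpoly (Amat α β γ δ φ κ) with hp
  have hmon : p.Monic := Matrix.charpoly_monic _
  have hp0 : p ≠ 0 := hmon.ne_zero
  have hdeg : p.natDegree = 4 := by
    rw [hp]
    simpa using Matrix.charpoly_natDegree_eq_dim (Amat α β γ δ φ κ)
  have hcp := Amat_charpoly α β γ δ φ κ
  rw [← hp] at hcp
  -- 1 is a root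
  have h1root : (1:ℝ) ∈ p.roots := by
    rw [Polynomial.mem_roots hp0]
    rw [Polynomial.IsRoot, hcp]
    simp only [eval_add, eval_mul, eval_pow, eval_X, eval_C]
    ring
  set neg : Multiset ℝ := p.roots.filter (fun x : ℝ => x < 0) with hnegdef
  have h1notneg : (1:ℝ) ∉ neg := by
    intro h
    have := (Multiset.mem_filter.mp h).2
    norm_num at this
  -- neg + {1} ≤ p.roots
  have hle : neg + {(1:ℝ)} ≤ p.roots := by
    rw [Multiset.le_iff_count]
    intro x
    by_cases hx : x = 1
    · subst hx
      have hc1 : Multiset.count (1:ℝ) neg = 0 := Multiset.count_eq_zero.mpr h1notneg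
      have hm : 1 ≤ Multiset.count (1:ℝ) p.roots := Multiset.one_le_count_iff_mem.mpr h1root
      rw [Multiset.count_add, hc1, Multiset.count_singleton_self]
      omega
    · have hcnt : Multiset.count x (neg + {(1:ℝ)}) = Multiset.count x neg := by
        simp [Multiset.count_singleton, hx]
      rw [hcnt]
      exact Multiset.count_le_of_le x (Multiset.filter_le _ _)
  have hcard4 : p.roots.card ≤ 4 := by
    have := p.card_roots'
    omega
  have hnc3 : 3 ≤ Multiset.card neg := hcard3
  have hcardle : p.roots.card ≤ (neg + {(1:ℝ)}).card := by
    simp only [Multiset.card_add, Multiset.card_singleton]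
    omega
  have heq : neg + {(1:ℝ)} = p.roots := Multiset.eq_of_le_of_card_le hle hcardle
  have hnegcard : neg.card = 3 := by
    have h1 : (neg + {(1:ℝ)}).card = neg.card + 1 := by simp
    have h2 : (neg + {(1:ℝ)}).card ≤ 4 := heq ▸ hcard4
    omega
  obtain ⟨r1, r2, r3, hneg3⟩ := Multiset.card_eq_three.mp hnegcard
  have hr1 : r1 < 0 := by
    have : r1 ∈ neg := by rw [hneg3]; simp
    exact (Multiset.mem_filter.mp this).2
  have hr2 : r2 < 0 := by
    have : r2 ∈ neg := by rw [hneg3]; simp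
    exact (Multiset.mem_filter.mp this).2
  have hr3 : r3 < 0 := by
    have : r3 ∈ neg := by rw [hneg3]; simp
    exact (Multiset.mem_filter.mp this).2
  have hroots : p.roots = {r1, r2, r3, (1:ℝ)} := by
    rw [← heq, hneg3]
    rfl
  have hrootscard : p.roots.card = p.natDegree := by
    rw [hroots, hdeg]
    rfl
  have hprod : (p.roots.map fun a => X - C a).prod = p :=
    Polynomial.prod_multiset_X_sub_C_of_monic_of_roots_card_eq hmon hrootscard
  rw [hroots] at hprod
  have hprod2 : (X - C r1) * ((X - C r2) * ((X - C r3) * (X - C (1:ℝ)))) = p := by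
    rw [← hprod]
    simp [Multiset.map_cons, Multiset.prod_cons, mul_assoc]
  rw [prod_four_linear] at hprod2
  rw [hcp] at hprod2
  obtain ⟨hA3, hA2⟩ := coeff_extract _ _ _ _ _ _ _ _ hprod2.symm
  -- hA3 : -(α + γ + φ + κ) = -(r1 + r2 + r3 + 1)
  -- hA2 : c2 = r1*r2 + r1*r3 + r2*r3 + r1 + r2 + r3
  have hsum : r1 + r2 + r3 = α + γ + φ + κ - 1 := by linarith
  have htr : α + γ + φ + κ ≤ 1 := by nlinarith
  have hpairs : 0 < r1*r2 + r1*r3 + r2*r3 := by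
    have := mul_pos_of_neg_of_neg hr1 hr2
    have := mul_pos_of_neg_of_neg hr1 hr3
    have := mul_pos_of_neg_of_neg hr2 hr3
    linarith
  have hkey := core_ineq α β γ δ φ κ hα hα1 hβ hγ hδ hφ hκ hκ1 hβγ hδφ htr
  -- from hA2: c2 - (tr - 1) = pairs > 0, i.e. T < 0, contradicting hkey
  nlinarith [hpairs, hA2, hsum, hkey]
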